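/- Let n ≥ 4 be even and 1 ≤ z ≤ ⌊(n-1)/2⌋. Let x : Fin n → ℝ be sorted and let y = x_{n/2} (the left median). Then OPT_SC(y, x, z) ≤ (n/(n - 2z)) · OPT*_SC(x, z). -/

import Mathlib

/-- Utilitarian social cost with `z` outliers of placing the facility at `y`:
minimum over sets `S` of `n - z` non-outliers of the total distance. -/
noncomputable def OPTsc (n z : ℕ) (x : Fin n → ℝ) (y : ℝ) : ℝ :=
  sInf {c : ℝ | ∃ S : Finset (Fin n), S.card = n - z ∧ c = ∑ i ∈ S, |y - x i|}

/-- Optimal utilitarian social cost with `z` outliers. -/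
noncomputable def OPTscStar (n z : ℕ) (x : Fin n → ℝ) : ℝ :=
  sInf (Set.range (OPTsc n z x))


lemma costset_nonempty (n z : ℕ) (x : Fin n → ℝ) (y : ℝ) :
    {c : ℝ | ∃ S : Finset (Fin n), S.card = n - z ∧ c = ∑ i ∈ S, |y - x i|}.Nonempty := by
  obtain ⟨S, -, hS⟩ := Finset.exists_subset_card_eq (s := (Finset.univ : Finset (Fin n))) (n := n - z)
    (by simp)
  exact ⟨∑ i ∈ S, |y - x i|, S, hS, rfl⟩

lemma costset_bdd (n z : ℕ) (x : Fin n → ℝ) (y : ℝ) :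
    BddBelow {c : ℝ | ∃ S : Finset (Fin n), S.card = n - z ∧ c = ∑ i ∈ S, |y - x i|} := by
  refine ⟨0, fun c hc => ?_⟩
  obtain ⟨S, -, rfl⟩ := hc
  exact Finset.sum_nonneg fun i _ => abs_nonneg _

/-- filter cardinality lower bound -/
lemma filter_card_ge {n : ℕ} (S : Finset (Fin n)) (p : Fin n → Prop) [DecidablePred p] :
    (Finset.univ.filter p).card ≤ (S.filter p).card + (n - S.card) := by
  have hsub : Finset.univ.filter p ⊆ S.filter p ∪ Sᶜ := by
    intro i hi
    simp only [Finset.mem_filter, Finset.mem_univ, true_and] at hi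
    by_cases h : i ∈ S
    · exact Finset.mem_union_left _ (Finset.mem_filter.mpr ⟨h, hi⟩)
    · exact Finset.mem_union_right _ (Finset.mem_compl.mpr h)
  calc (Finset.univ.filter p).card ≤ (S.filter p ∪ Sᶜ).card := Finset.card_le_card hsub
    _ ≤ (S.filter p).card + Sᶜ.card := Finset.card_union_le _ _
    _ = (S.filter p).card + (n - S.card) := by rw [Finset.card_compl, Fintype.card_fin]

lemma split_sum {α : Type*} (S : Finset α) (p : α → Prop) [DecidablePred p]
    (g h : α → ℝ) (d : ℝ) (hd : 0 ≤ d)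
    (h1 : ∀ i ∈ S, p i → g i + d = h i)
    (h2 : ∀ i ∈ S, g i ≤ h i + d)
    (hg : ∀ i ∈ S, 0 ≤ g i) (hh : ∀ i ∈ S, 0 ≤ h i) :
    (∑ i ∈ S, g i ≤ ∑ i ∈ S, h i
        + (((S.filter (fun i => ¬ p i)).card : ℝ) - ((S.filter p).card : ℝ)) * d)
    ∧ ((S.filter p).card : ℝ) * d ≤ ∑ i ∈ S, h i := by
  have hsg := (Finset.sum_filter_add_sum_filter_not S p g).symm
  have hsh := (Finset.sum_filter_add_sum_filter_not S p h).symm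
  have hA : ∑ i ∈ S.filter p, g i + ((S.filter p).card : ℝ) * d = ∑ i ∈ S.filter p, h i := by
    have e1 : ∑ i ∈ S.filter p, (g i + d) = ∑ i ∈ S.filter p, h i :=
      Finset.sum_congr rfl (fun i hi => h1 i (Finset.mem_of_mem_filter i hi)
        (Finset.mem_filter.mp hi).2)
    rw [Finset.sum_add_distrib, Finset.sum_const, nsmul_eq_mul] at e1
    exact e1
  have hB : ∑ i ∈ S.filter (fun i => ¬ p i), g i
      ≤ ∑ i ∈ S.filter (fun i => ¬ p i), h i + ((S.filter (fun i => ¬ p i)).card : ℝ) * d := by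
    have e1 : ∑ i ∈ S.filter (fun i => ¬ p i), g i
        ≤ ∑ i ∈ S.filter (fun i => ¬ p i), (h i + d) :=
      Finset.sum_le_sum (fun i hi => h2 i (Finset.mem_of_mem_filter i hi))
    rw [Finset.sum_add_distrib, Finset.sum_const, nsmul_eq_mul] at e1
    exact e1
  constructor
  · rw [hsg, hsh]; linarith
  · have e2 : ((S.filter p).card : ℝ) * d ≤ ∑ i ∈ S.filter p, h i := by
      have : ∀ i ∈ S.filter p, d ≤ h i := fun i hi => by
        have := h1 i (Finset.mem_of_mem_filter i hi) (Finset.mem_filter.mp hi).2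
        have := hg i (Finset.mem_of_mem_filter i hi)
        linarith
      calc ((S.filter p).card : ℝ) * d = ∑ _i ∈ S.filter p, d := by
            rw [Finset.sum_const, nsmul_eq_mul]
        _ ≤ ∑ i ∈ S.filter p, h i := Finset.sum_le_sum this
    have e3 : (0:ℝ) ≤ ∑ i ∈ S.filter (fun i => ¬ p i), h i :=
      Finset.sum_nonneg (fun i hi => hh i (Finset.mem_of_mem_filter i hi))
    rw [hsh]; linarith

lemma final_alg (kR zR a b G C dd : ℝ) (hz0 : 0 ≤ zR) (hzk : zR + 1 ≤ kR)
    (hab : a + b = 2 * kR - zR) (ha : kR - zR ≤ a)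
    (hs1 : G ≤ C + (b - a) * dd) (hs2 : a * dd ≤ C) (hd : 0 ≤ dd) (hC : 0 ≤ C) :
    (2 * kR - 2 * zR) * G ≤ 2 * kR * C := by
  have hba : b - a ≤ zR := by linarith
  have h5 : G ≤ C + zR * dd := by nlinarith [mul_le_mul_of_nonneg_right hba hd]
  have h6 : (kR - zR) * dd ≤ C := by nlinarith [mul_le_mul_of_nonneg_right ha hd]
  nlinarith [mul_le_mul_of_nonneg_left h5 (show (0:ℝ) ≤ kR - zR by linarith),
    mul_le_mul_of_nonneg_left h6 hz0]


lemma key_bound (n z : ℕ) (hn : 4 ≤ n) (heven : Even n) (hz1 : 1 ≤ z) (hz2 : z ≤ (n - 1) / 2)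
    (x : Fin n → ℝ) (hx : Monotone x) (y : ℝ) (S : Finset (Fin n)) (hS : S.card = n - z) :
    ((n:ℝ) - 2*z) * ∑ i ∈ S, |x ⟨n / 2 - 1, by omega⟩ - x i| ≤ (n:ℝ) * ∑ i ∈ S, |y - x i| := by
  obtain ⟨k, hk⟩ : ∃ k, n = 2 * k := heven.exists_two_nsmul n
  have hzk : z + 1 ≤ k := by omega
  have hkn : k - 1 < n := by omega
  set mi : Fin n := ⟨n / 2 - 1, by omega⟩ with hmi
  have hmi' : (mi : ℕ) = k - 1 := by simp [hmi]; omega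
  set m : ℝ := x mi with hm
  set g : Fin n → ℝ := fun i => |m - x i| with hgdef
  set h : Fin n → ℝ := fun i => |y - x i| with hhdef
  have hg : ∀ i ∈ S, 0 ≤ g i := fun i _ => abs_nonneg _
  have hh : ∀ i ∈ S, 0 ≤ h i := fun i _ => abs_nonneg _
  have hGnn : 0 ≤ ∑ i ∈ S, g i := Finset.sum_nonneg hg
  have hcnn : 0 ≤ ∑ i ∈ S, h i := Finset.sum_nonneg hh
  have hcast : ∀ (p : Fin n → Prop) (inst : DecidablePred p),
      ((S.filter p).card : ℝ) + ((S.filter (fun i => ¬ p i)).card : ℝ) = (n : ℝ) - z := by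
    intro p inst
    have h1 := Finset.card_filter_add_card_filter_not (s := S) (p := p)
    rw [hS] at h1
    have hz : z ≤ n := by omega
    have h2 := congrArg (Nat.cast : ℕ → ℝ) h1
    push_cast [Nat.cast_sub hz] at h2
    convert h2 using 3
  rcases le_total y m with hy | hy
  · -- y ≤ m : use p i := mi ≤ i
    set p : Fin n → Prop := fun i => mi ≤ i with hp
    have hd : (0:ℝ) ≤ m - y := by linarith
    have h1 : ∀ i ∈ S, p i → g i + (m - y) = h i := by
      intro i _ hpi
      have hxi : m ≤ x i := hx hpi
      simp only [hgdef, hhdef]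
      rw [abs_of_nonpos (by linarith), abs_of_nonpos (by linarith)]
      ring
    have h2 : ∀ i ∈ S, g i ≤ h i + (m - y) := by
      intro i _
      have := abs_sub_le m y (x i)
      have : |m - y| = m - y := abs_of_nonneg hd
      simp only [hgdef, hhdef]
      calc |m - x i| ≤ |m - y| + |y - x i| := abs_sub_le m y (x i)
        _ = |y - x i| + (m - y) := by rw [this]; ring
    obtain ⟨hs1, hs2⟩ := split_sum S p g h (m - y) hd h1 h2 hg hh
    -- cardinality of filter p over univ
    have hPcard : (Finset.univ.filter p).card = n - (k - 1) := by
      have : Finset.univ.filter p = Finset.Ici mi := by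
        ext i; simp [hp, Finset.mem_Ici]
      rw [this, Fin.card_Ici, hmi']
    have hacard : n - (k - 1) ≤ (S.filter p).card + z := by
      have := filter_card_ge S p
      rw [hS] at this
      omega
    have haR : (k:ℝ) + 1 - z ≤ ((S.filter p).card : ℝ) := by
      have h3 : k + 1 ≤ (S.filter p).card + z := by omega
      have := (Nat.cast_le (α := ℝ)).mpr h3
      push_cast at this ⊢
      linarith
    have hbR := hcast p (fun i => inferInstance)
    have hnR : (n:ℝ) = 2 * (k:ℝ) := by exact_mod_cast congrArg (Nat.cast : ℕ → ℝ) hk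
    have hzkR : (z:ℝ) + 1 ≤ (k:ℝ) := by exact_mod_cast hzk
    have hz0 : (0:ℝ) ≤ z := Nat.cast_nonneg z
    have hgoal := final_alg (k:ℝ) (z:ℝ) _ _ (∑ i ∈ S, g i) (∑ i ∈ S, h i) _
      hz0 hzkR (by linarith [hbR]) (by linarith [haR]) hs1 hs2 hd hcnn
    rw [hnR]
    linarith [hgoal]
  · -- m ≤ y : use p i := i ≤ mi
    set p : Fin n → Prop := fun i => i ≤ mi with hp
    have hd : (0:ℝ) ≤ y - m := by linarith
    have h1 : ∀ i ∈ S, p i → g i + (y - m) = h i := by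
      intro i _ hpi
      have hxi : x i ≤ m := hx hpi
      simp only [hgdef, hhdef]
      rw [abs_of_nonneg (by linarith), abs_of_nonneg (by linarith)]
      ring
    have h2 : ∀ i ∈ S, g i ≤ h i + (y - m) := by
      intro i _
      have habs : |m - y| = y - m := by rw [abs_sub_comm]; exact abs_of_nonneg hd
      simp only [hgdef, hhdef]
      calc |m - x i| ≤ |m - y| + |y - x i| := abs_sub_le m y (x i)
        _ = |y - x i| + (y - m) := by rw [habs]; ring
    obtain ⟨hs1, hs2⟩ := split_sum S p g h (y - m) hd h1 h2 hg hh
    have hPcard : (Finset.univ.filter p).card = k := by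
      have : Finset.univ.filter p = Finset.Iic mi := by
        ext i; simp [hp, Finset.mem_Iic]
      rw [this, Fin.card_Iic, hmi']
      omega
    have hacard : k ≤ (S.filter p).card + z := by
      have := filter_card_ge S p
      rw [hS] at this
      omega
    have haR : (k:ℝ) - z ≤ ((S.filter p).card : ℝ) := by
      have := (Nat.cast_le (α := ℝ)).mpr hacard
      push_cast at this ⊢
      linarith
    have hbR := hcast p (fun i => inferInstance)
    have hnR : (n:ℝ) = 2 * (k:ℝ) := by exact_mod_cast congrArg (Nat.cast : ℕ → ℝ) hk
    have hzkR : (z:ℝ) + 1 ≤ (k:ℝ) := by exact_mod_cast hzk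
    have hz0 : (0:ℝ) ≤ z := Nat.cast_nonneg z
    have hgoal := final_alg (k:ℝ) (z:ℝ) _ _ (∑ i ∈ S, g i) (∑ i ∈ S, h i) _
      hz0 hzkR (by linarith [hbR]) (by linarith [haR]) hs1 hs2 hd hcnn
    rw [hnR]
    linarith [hgoal]

theorem stmt_11 (n z : ℕ) (hn : 4 ≤ n) (heven : Even n) (hz1 : 1 ≤ z) (hz2 : z ≤ (n - 1) / 2)
    (x : Fin n → ℝ) (hx : Monotone x) :
    OPTsc n z x (x ⟨n / 2 - 1, by omega⟩) ≤
      ((n : ℝ) / ((n : ℝ) - 2 * z)) * OPTscStar n z x := by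
  obtain ⟨k, hk⟩ : ∃ k, n = 2 * k := heven.exists_two_nsmul n
  have h2z : 2 * z + 2 ≤ n := by omega
  have hpos : (0:ℝ) < (n:ℝ) - 2 * z := by
    have := (Nat.cast_le (α := ℝ)).mpr h2z
    push_cast at this
    linarith
  have hnpos : (0:ℝ) < (n:ℝ) := by positivity
  set med : ℝ := x ⟨n / 2 - 1, by omega⟩ with hmed
  have hstar : OPTsc n z x med * ((n:ℝ) - 2 * z) / n ≤ OPTscStar n z x := by
    rw [OPTscStar]
    apply le_csInf ⟨OPTsc n z x 0, Set.mem_range_self 0⟩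
    rintro b ⟨y, rfl⟩
    show OPTsc n z x med * ((n:ℝ) - 2 * z) / n ≤
      sInf {c : ℝ | ∃ S : Finset (Fin n), S.card = n - z ∧ c = ∑ i ∈ S, |y - x i|}
    apply le_csInf (costset_nonempty n z x y)
    rintro c ⟨S, hS, rfl⟩
    rw [div_le_iff₀ hnpos]
    have h1 : OPTsc n z x med ≤ ∑ i ∈ S, |med - x i| :=
      csInf_le (costset_bdd n z x med) ⟨S, hS, rfl⟩
    have h2 := key_bound n z hn heven hz1 hz2 x hx y S hS
    have h3 := mul_le_mul_of_nonneg_right h1 (le_of_lt hpos)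
    linarith
  have hratio : (0:ℝ) ≤ (n:ℝ) / ((n:ℝ) - 2 * z) := by positivity
  calc OPTsc n z x med
      = ((n:ℝ) / ((n:ℝ) - 2 * z)) * (OPTsc n z x med * ((n:ℝ) - 2 * z) / n) := by
        field_simp
    _ ≤ ((n:ℝ) / ((n:ℝ) - 2 * z)) * OPTscStar n z x :=
        mul_le_mul_of_nonneg_left hstar hratio
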